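/- arXiv:2402.13501 — 2 statements merged into one kernel-verified Lean document; each statement's English description precedes it below -/
import Mathlib

section
/- Let G be a Hermitian unitary, V = exp(-i(θ/2)G), and O an operator anticommuting with G. If θ ~ N(0, σ²), then E_θ[Tr[O V ρ V†]] = e^{-σ²/2} Tr[O ρ]. -/
open Matrix MeasureTheory Real

/-- Gaussian density with mean `μ` and variance `σ²`. -/
noncomputable def gaussDensity (σ μ x : ℝ) : ℝ :=
  (1 / (Real.sqrt (2 * Real.pi) * σ)) * Real.exp (-(x - μ) ^ 2 / (2 * σ ^ 2))

/-- The rotation `V = exp(-i(θ/2)G) = cos(θ/2)·I - i sin(θ/2)·G` generated by a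
Hermitian unitary `G`. -/
noncomputable def rotGate {n : ℕ} (G : Matrix (Fin n) (Fin n) ℂ) (θ : ℝ) :
    Matrix (Fin n) (Fin n) ℂ :=
  (Complex.cos ((θ : ℂ) / 2)) • (1 : Matrix (Fin n) (Fin n) ℂ)
    - (Complex.I * Complex.sin ((θ : ℂ) / 2)) • G

lemma trace_expand {n : ℕ} (G O ρ : Matrix (Fin n) (Fin n) ℂ)
    (hGherm : Gᴴ = G) (hGunit : G * G = 1)
    (hanti : O * G + G * O = 0) (θ : ℝ) :
    (O * rotGate G θ * ρ * (rotGate G θ)ᴴ).trace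
      = (Real.cos θ : ℂ) * (O * ρ).trace
        + Complex.I * (Real.sin θ : ℂ) * (G * O * ρ).trace := by
  have hOG : O * G = -(G * O) := eq_neg_of_add_eq_zero_left hanti
  set a : ℂ := (Real.cos (θ / 2) : ℂ) with ha
  set s : ℂ := (Real.sin (θ / 2) : ℂ) with hs
  have hrot : rotGate G θ = a • (1 : Matrix (Fin n) (Fin n) ℂ) - (Complex.I * s) • G := by
    rw [rotGate, ha, hs]
    push_cast [Complex.ofReal_cos, Complex.ofReal_sin]
    norm_num
  have hca : (starRingEnd ℂ) a = a := by rw [ha]; exact Complex.conj_ofReal _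
  have hcs : (starRingEnd ℂ) s = s := by rw [hs]; exact Complex.conj_ofReal _
  have hrotH : (rotGate G θ)ᴴ = a • (1 : Matrix (Fin n) (Fin n) ℂ) + (Complex.I * s) • G := by
    rw [hrot]
    simp only [conjTranspose_sub, conjTranspose_smul, conjTranspose_one, hGherm, star_mul',
      Complex.star_def, Complex.conj_I, hca, hcs]
    module
  rw [hrotH, hrot]
  have expand : O * (a • (1 : Matrix (Fin n) (Fin n) ℂ) - (Complex.I * s) • G) * ρ *
        (a • (1 : Matrix (Fin n) (Fin n) ℂ) + (Complex.I * s) • G)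
      = (a ^ 2) • (O * ρ) + (a * (Complex.I * s)) • (O * ρ * G)
        - (a * (Complex.I * s)) • (O * G * ρ) - ((Complex.I * s) ^ 2) • (O * G * ρ * G) := by
    simp only [Matrix.mul_sub, Matrix.mul_add, Matrix.sub_mul, Matrix.add_mul,
      Matrix.mul_smul, Matrix.smul_mul, Matrix.mul_one, Matrix.one_mul, smul_smul]
    module
  rw [expand]
  have h1 : (O * ρ * G).trace = (G * O * ρ).trace := by rw [Matrix.trace_mul_cycle]
  have h2 : O * G * ρ = -(G * O * ρ) := by rw [hOG]; simp
  have h3 : (G * O * ρ * G).trace = (O * ρ).trace := by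
    rw [Matrix.trace_mul_comm]
    simp [← Matrix.mul_assoc, hGunit]
  have h4 : (-(G * O * ρ) * G).trace = -((O * ρ).trace) := by
    rw [Matrix.neg_mul, Matrix.trace_neg, h3]
  simp only [Matrix.trace_sub, Matrix.trace_add, Matrix.trace_smul, h1, h2, Matrix.trace_neg, h4,
    smul_eq_mul, smul_neg]
  have hc : (Real.cos θ : ℂ) = a ^ 2 - s ^ 2 := by
    rw [ha, hs]
    have : Real.cos θ = Real.cos (θ/2) ^ 2 - Real.sin (θ/2) ^ 2 := by
      rw [← Real.cos_two_mul', ← mul_div_assoc]; norm_num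
    rw [this]; push_cast; ring
  have hsin : (Real.sin θ : ℂ) = 2 * a * s := by
    rw [ha, hs]
    have : Real.sin θ = 2 * Real.sin (θ/2) * Real.cos (θ/2) := by
      rw [← Real.sin_two_mul, ← mul_div_assoc]; norm_num
    rw [this]; push_cast; ring
  rw [hc, hsin]
  have hI : Complex.I ^ 2 = -1 := Complex.I_sq
  ring_nf
  rw [hI]
  ring

lemma gauss_sin_int (σ : ℝ) : ∫ θ : ℝ, gaussDensity σ 0 θ * Real.sin θ = 0 := by
  have h : ∀ θ : ℝ, gaussDensity σ 0 (-θ) * Real.sin (-θ) = -(gaussDensity σ 0 θ * Real.sin θ) := by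
    intro θ; simp [gaussDensity, Real.sin_neg]
  have h2 : (∫ θ : ℝ, gaussDensity σ 0 (-θ) * Real.sin (-θ))
      = ∫ θ : ℝ, gaussDensity σ 0 θ * Real.sin θ :=
    integral_neg_eq_self (fun θ => gaussDensity σ 0 θ * Real.sin θ) _
  simp only [h, integral_neg] at h2
  linarith

lemma gauss_cos_int (σ : ℝ) (hσ : 0 < σ) :
    ∫ θ : ℝ, gaussDensity σ 0 θ * Real.cos θ = Real.exp (-σ ^ 2 / 2) := by
  set b : ℝ := 1 / (2 * σ ^ 2) with hbdef
  have hσ2 : (0:ℝ) < σ ^ 2 := by positivity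
  have hb : 0 < b := by positivity
  have hbC : (0:ℝ) < ((b : ℂ)).re := by simpa using hb
  have key := fourierIntegral_gaussian hbC 1
  -- rewrite integrand of key
  have hint : ∀ x : ℝ, Complex.exp (Complex.I * 1 * x) * Complex.exp (-(b:ℂ) * x ^ 2)
      = ((Real.cos x * Real.exp (-b * x ^ 2) : ℝ) : ℂ)
        + Complex.I * ((Real.sin x * Real.exp (-b * x ^ 2) : ℝ) : ℂ) := by
    intro x
    rw [mul_one, mul_comm Complex.I (x:ℂ), Complex.exp_mul_I,
      show -(b:ℂ) * (x:ℂ) ^ 2 = ((-b * x ^ 2 : ℝ) : ℂ) by push_cast; ring,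
      ← Complex.ofReal_exp, ← Complex.ofReal_cos, ← Complex.ofReal_sin]
    push_cast
    ring
  have hInt1 : Integrable (fun x : ℝ => Real.cos x * Real.exp (-b * x ^ 2)) :=
    (integrable_exp_neg_mul_sq hb).bdd_mul (Real.continuous_cos.aestronglyMeasurable)
      (c := 1) (ae_of_all _ fun x => by simpa using Real.abs_cos_le_one x)
  have hInt2 : Integrable (fun x : ℝ => Real.sin x * Real.exp (-b * x ^ 2)) :=
    (integrable_exp_neg_mul_sq hb).bdd_mul (Real.continuous_sin.aestronglyMeasurable)
      (c := 1) (ae_of_all _ fun x => by simpa using Real.abs_sin_le_one x)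
  have hsin0 : ∫ x : ℝ, Real.sin x * Real.exp (-b * x ^ 2) = 0 := by
    have h2 : (∫ x : ℝ, Real.sin (-x) * Real.exp (-b * (-x) ^ 2))
        = ∫ x : ℝ, Real.sin x * Real.exp (-b * x ^ 2) :=
      integral_neg_eq_self (fun x => Real.sin x * Real.exp (-b * x ^ 2)) _
    have h : ∀ x : ℝ, Real.sin (-x) * Real.exp (-b * (-x) ^ 2)
        = -(Real.sin x * Real.exp (-b * x ^ 2)) := by intro x; simp
    simp only [h, integral_neg] at h2
    linarith
  have hLHS : (∫ x : ℝ, Complex.exp (Complex.I * 1 * x) * Complex.exp (-(b:ℂ) * x ^ 2))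
      = ((∫ x : ℝ, Real.cos x * Real.exp (-b * x ^ 2) : ℝ) : ℂ) := by
    simp_rw [hint]
    have e1 : Integrable (fun x : ℝ => ((Real.cos x * Real.exp (-b * x ^ 2) : ℝ) : ℂ)) :=
      hInt1.ofReal
    have e2 : Integrable (fun x : ℝ =>
        Complex.I * ((Real.sin x * Real.exp (-b * x ^ 2) : ℝ) : ℂ)) :=
      (hInt2.ofReal (𝕜 := ℂ)).const_mul Complex.I
    rw [integral_add e1 e2, integral_const_mul]
    have e3 : (∫ x : ℝ, ((Real.cos x * Real.exp (-b * x ^ 2) : ℝ) : ℂ))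
        = ((∫ x : ℝ, Real.cos x * Real.exp (-b * x ^ 2) : ℝ) : ℂ) := integral_ofReal
    have e4 : (∫ x : ℝ, ((Real.sin x * Real.exp (-b * x ^ 2) : ℝ) : ℂ))
        = ((∫ x : ℝ, Real.sin x * Real.exp (-b * x ^ 2) : ℝ) : ℂ) := integral_ofReal
    rw [e3, e4, hsin0]
    simp
  rw [hLHS] at key
  -- rewrite RHS of key
  have hπb : (Real.pi : ℂ) / (b : ℂ) = ((2 * Real.pi * σ ^ 2 : ℝ) : ℂ) := by
    rw [hbdef]; push_cast; field_simp
  have hRHS : ((Real.pi : ℂ) / (b:ℂ)) ^ (1 / 2 : ℂ) * Complex.exp (-(1:ℂ) ^ 2 / (4 * (b:ℂ)))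
      = ((Real.sqrt (2 * Real.pi) * σ * Real.exp (-σ ^ 2 / 2) : ℝ) : ℂ) := by
    rw [hπb]
    have h1 : ((2 * Real.pi * σ ^ 2 : ℝ) : ℂ) ^ (1 / 2 : ℂ)
        = ((Real.sqrt (2 * Real.pi) * σ : ℝ) : ℂ) := by
      rw [show ((1:ℂ)/2) = ((1/2 : ℝ) : ℂ) by norm_num, ← Complex.ofReal_cpow (by positivity)]
      congr 1
      rw [← Real.sqrt_eq_rpow, Real.sqrt_mul (by positivity), Real.sqrt_sq hσ.le]
    have h2 : -(1:ℂ) ^ 2 / (4 * (b:ℂ)) = ((-σ ^ 2 / 2 : ℝ) : ℂ) := by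
      rw [hbdef]; push_cast; field_simp; ring
    rw [h1, h2, ← Complex.ofReal_exp, ← Complex.ofReal_mul]
  rw [hRHS] at key
  have hcos : ∫ x : ℝ, Real.cos x * Real.exp (-b * x ^ 2)
      = Real.sqrt (2 * Real.pi) * σ * Real.exp (-σ ^ 2 / 2) := by
    exact_mod_cast key
  have hne : Real.sqrt (2 * Real.pi) * σ ≠ 0 := by positivity
  have hgd : ∀ θ : ℝ, gaussDensity σ 0 θ * Real.cos θ
      = (1 / (Real.sqrt (2 * Real.pi) * σ)) * (Real.cos θ * Real.exp (-b * θ ^ 2)) := by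
    intro θ
    rw [gaussDensity, hbdef]
    rw [show (-(θ - 0) ^ 2 / (2 * σ ^ 2)) = -(1 / (2 * σ ^ 2)) * θ ^ 2 by field_simp; simp]
    ring
  simp_rw [hgd]
  rw [integral_const_mul, hcos]
  field_simp

lemma gauss_integrable (σ : ℝ) (hσ : 0 < σ) : Integrable (gaussDensity σ 0) := by
  have hb : (0:ℝ) < 1 / (2 * σ ^ 2) := by positivity
  have : gaussDensity σ 0 = fun x =>
      (1 / (Real.sqrt (2 * Real.pi) * σ)) * Real.exp (-(1 / (2 * σ ^ 2)) * x ^ 2) := by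
    funext x
    rw [gaussDensity, show (-(x - 0) ^ 2 / (2 * σ ^ 2)) = -(1 / (2 * σ ^ 2)) * x ^ 2 by
      field_simp; simp]
  rw [this]
  exact (integrable_exp_neg_mul_sq hb).const_mul _

theorem gaussian_expectation_trace_conj {n : ℕ} (σ : ℝ) (hσ : 0 < σ)
    (G O ρ : Matrix (Fin n) (Fin n) ℂ)
    (hGherm : Gᴴ = G) (hGunit : G * G = 1)
    (hanti : O * G + G * O = 0) :
    ∫ θ : ℝ, (gaussDensity σ 0 θ : ℂ) * (O * rotGate G θ * ρ * (rotGate G θ)ᴴ).trace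
      = (Real.exp (-σ ^ 2 / 2) : ℂ) * (O * ρ).trace := by
  have hg := gauss_integrable σ hσ
  set A := (O * ρ).trace with hA
  set B := (G * O * ρ).trace with hB
  have hgc : Integrable (fun θ : ℝ => gaussDensity σ 0 θ * Real.cos θ) := by
    have := hg.bdd_mul Real.continuous_cos.aestronglyMeasurable
      (c := 1) (ae_of_all _ fun x => by simpa using Real.abs_cos_le_one x)
    simpa [mul_comm] using this
  have hgs : Integrable (fun θ : ℝ => gaussDensity σ 0 θ * Real.sin θ) := by
    have := hg.bdd_mul Real.continuous_sin.aestronglyMeasurable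
      (c := 1) (ae_of_all _ fun x => by simpa using Real.abs_sin_le_one x)
    simpa [mul_comm] using this
  have hint : ∀ θ : ℝ, (gaussDensity σ 0 θ : ℂ) * (O * rotGate G θ * ρ * (rotGate G θ)ᴴ).trace
      = ((gaussDensity σ 0 θ * Real.cos θ : ℝ) : ℂ) * A
        + (Complex.I * B) * ((gaussDensity σ 0 θ * Real.sin θ : ℝ) : ℂ) := by
    intro θ
    rw [trace_expand G O ρ hGherm hGunit hanti θ]
    push_cast
    ring
  simp_rw [hint]
  have e1 : Integrable (fun θ : ℝ => ((gaussDensity σ 0 θ * Real.cos θ : ℝ) : ℂ) * A) :=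
    (hgc.ofReal (𝕜 := ℂ)).mul_const A
  have e2 : Integrable (fun θ : ℝ =>
      (Complex.I * B) * ((gaussDensity σ 0 θ * Real.sin θ : ℝ) : ℂ)) :=
    (hgs.ofReal (𝕜 := ℂ)).const_mul _
  rw [integral_add e1 e2, integral_mul_const, integral_const_mul]
  have e3 : (∫ θ : ℝ, ((gaussDensity σ 0 θ * Real.cos θ : ℝ) : ℂ))
      = ((∫ θ : ℝ, gaussDensity σ 0 θ * Real.cos θ : ℝ) : ℂ) := integral_ofReal
  have e4 : (∫ θ : ℝ, ((gaussDensity σ 0 θ * Real.sin θ : ℝ) : ℂ))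
      = ((∫ θ : ℝ, gaussDensity σ 0 θ * Real.sin θ : ℝ) : ℂ) := integral_ofReal
  rw [e3, e4, gauss_cos_int σ hσ, gauss_sin_int σ]
  simp
end

section
/- Let G be a Hermitian unitary, V = exp(-i(θ/2)G), and O₁, O₂ operators anticommuting with G. If θ ~ N(0, σ²), then E_θ[Tr[O₁ V ρ V†] Tr[O₂ V ρ V†]] = α Tr[O₁ρ] Tr[O₂ρ] + β Tr[iGO₁ρ] Tr[iGO₂ρ], where α = (1+e^{-2σ²})/2 and β = (1-e^{-2σ²})/2. -/
open Matrix MeasureTheory Real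

lemma trace_rot {n : ℕ} (G O ρ : Matrix (Fin n) (Fin n) ℂ)
    (hGherm : Gᴴ = G) (hGunit : G * G = 1) (hanti : O * G + G * O = 0) (θ : ℝ) :
    (O * rotGate G θ * ρ * (rotGate G θ)ᴴ).trace
      = Complex.cos θ * (O * ρ).trace
        + Complex.sin θ * ((Complex.I • (G * O)) * ρ).trace := by
  set c : ℂ := Complex.cos ((θ : ℂ) / 2) with hc
  set s : ℂ := Complex.sin ((θ : ℂ) / 2) with hs
  have hV : rotGate G θ = c • 1 - (Complex.I * s) • G := rfl
  have hcc : (starRingEnd ℂ) c = c := by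
    rw [hc, ← Complex.cos_conj]
    norm_num [map_div₀, Complex.conj_ofReal, Complex.conj_ofNat]
  have hsc : (starRingEnd ℂ) s = s := by
    rw [hs, ← Complex.sin_conj]
    norm_num [map_div₀, Complex.conj_ofReal, Complex.conj_ofNat]
  have hVH : (rotGate G θ)ᴴ = c • 1 + (Complex.I * s) • G := by
    rw [hV]
    simp [Matrix.conjTranspose_sub, Matrix.conjTranspose_smul, hGherm, hcc, hsc,
      Complex.conj_I, sub_neg_eq_add]
  have hOG : O * G = -(G * O) := eq_neg_of_add_eq_zero_left hanti
  have hcos : Complex.cos (θ : ℂ) = c * c - s * s := by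
    have h2 : (θ : ℂ) = 2 * ((θ : ℂ) / 2) := by ring
    have hpy := Complex.sin_sq_add_cos_sq ((θ : ℂ) / 2)
    rw [h2, Complex.cos_two_mul]
    rw [← hc, ← hs] at hpy
    linear_combination hpy
  have hsin : Complex.sin (θ : ℂ) = 2 * s * c := by
    have h2 : (θ : ℂ) = 2 * ((θ : ℂ) / 2) := by ring
    rw [h2, Complex.sin_two_mul, ← hc, ← hs]
  have key : (rotGate G θ)ᴴ * (O * rotGate G θ)
      = Complex.cos (θ : ℂ) • O + Complex.sin (θ : ℂ) • (Complex.I • (G * O)) := by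
    rw [hVH, hV, hcos, hsin]
    simp only [Matrix.mul_sub, Matrix.mul_add, Matrix.add_mul, Matrix.mul_smul,
      Matrix.smul_mul, Matrix.mul_one, Matrix.one_mul, smul_smul, hOG,
      Matrix.mul_neg, smul_neg, ← Matrix.mul_assoc, hGunit]
    match_scalars <;> first
      | ring1
      | linear_combination (s ^ 2 : ℂ) * Complex.I_sq
  calc (O * rotGate G θ * ρ * (rotGate G θ)ᴴ).trace
      = ((rotGate G θ)ᴴ * (O * rotGate G θ) * ρ).trace := by
        rw [Matrix.trace_mul_cycle]
    _ = Complex.cos θ * (O * ρ).trace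
        + Complex.sin θ * ((Complex.I • (G * O)) * ρ).trace := by
        rw [key]
        simp [Matrix.add_mul, Matrix.smul_mul, Matrix.trace_add, Matrix.trace_smul,
          smul_eq_mul]

lemma gaussDensity_mul_cexp (σ : ℝ) (hσ : 0 < σ) (c : ℂ) (θ : ℝ) :
    (gaussDensity σ 0 θ : ℂ) * Complex.exp (c * θ)
      = ((1 / (Real.sqrt (2 * Real.pi) * σ) : ℝ) : ℂ)
          * Complex.exp (((-(1 / (2 * σ ^ 2)) : ℝ) : ℂ) * θ ^ 2 + c * θ + 0) := by
  have hσ' : (σ : ℝ) ≠ 0 := ne_of_gt hσ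
  rw [gaussDensity]
  push_cast
  rw [mul_assoc, ← Complex.exp_add]
  congr 1
  field_simp
  congr 1
  ring

lemma gauss_re_neg (σ : ℝ) (hσ : 0 < σ) :
    (((-(1 / (2 * σ ^ 2)) : ℝ) : ℂ)).re < 0 := by
  rw [Complex.ofReal_re]
  have : 0 < 1 / (2 * σ ^ 2) := by positivity
  linarith

lemma gauss_exp_integrable (σ : ℝ) (hσ : 0 < σ) (c : ℂ) :
    Integrable (fun θ : ℝ => (gaussDensity σ 0 θ : ℂ) * Complex.exp (c * θ)) := by
  have h := (integrable_cexp_quadratic' (gauss_re_neg σ hσ) c 0).const_mul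
    ((1 / (Real.sqrt (2 * Real.pi) * σ) : ℝ) : ℂ)
  refine h.congr (ae_of_all _ fun θ => ?_)
  exact (gaussDensity_mul_cexp σ hσ c θ).symm

lemma gauss_exp_integral (σ : ℝ) (hσ : 0 < σ) (c : ℂ) :
    ∫ θ : ℝ, (gaussDensity σ 0 θ : ℂ) * Complex.exp (c * θ)
      = Complex.exp (c ^ 2 * σ ^ 2 / 2) := by
  have hσ' : (σ : ℝ) ≠ 0 := ne_of_gt hσ
  simp_rw [gaussDensity_mul_cexp σ hσ c]
  rw [integral_const_mul, integral_cexp_quadratic (gauss_re_neg σ hσ) c 0]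
  have h1 : ((π : ℂ) / -((-(1 / (2 * σ ^ 2)) : ℝ) : ℂ)) = ((2 * π * σ ^ 2 : ℝ) : ℂ) := by
    push_cast
    field_simp
  have h2 : ((2 * π * σ ^ 2 : ℝ) : ℂ) ^ (1 / 2 : ℂ) = ((Real.sqrt (2 * π) * σ : ℝ) : ℂ) := by
    have hnn : (0 : ℝ) ≤ 2 * π * σ ^ 2 := by positivity
    rw [show (1 / 2 : ℂ) = ((1 / 2 : ℝ) : ℂ) by norm_num,
      ← Complex.ofReal_cpow hnn]
    rw [← Real.sqrt_eq_rpow]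
    norm_cast
    rw [Real.sqrt_mul (by positivity) (σ ^ 2), Real.sqrt_sq hσ.le]
  have h3 : (0 : ℂ) - c ^ 2 / (4 * ((-(1 / (2 * σ ^ 2)) : ℝ) : ℂ)) = c ^ 2 * σ ^ 2 / 2 := by
    have : ((σ : ℂ)) ≠ 0 := by exact_mod_cast hσ'
    push_cast
    field_simp
    ring
  rw [h1, h2, h3]
  have h4 : 1 / (Real.sqrt (2 * π) * σ) * (Real.sqrt (2 * π) * σ) = 1 := by
    have : 0 < Real.sqrt (2 * π) * σ := by positivity
    field_simp
  rw [← mul_assoc, ← Complex.ofReal_mul, h4, Complex.ofReal_one, one_mul]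

theorem gaussian_expectation_trace_product {n : ℕ} (σ : ℝ) (hσ : 0 < σ)
    (G O₁ O₂ ρ : Matrix (Fin n) (Fin n) ℂ)
    (hGherm : Gᴴ = G) (hGunit : G * G = 1)
    (hanti₁ : O₁ * G + G * O₁ = 0) (hanti₂ : O₂ * G + G * O₂ = 0) :
    ∫ θ : ℝ, (gaussDensity σ 0 θ : ℂ)
        * ((O₁ * rotGate G θ * ρ * (rotGate G θ)ᴴ).trace
            * (O₂ * rotGate G θ * ρ * (rotGate G θ)ᴴ).trace)
      = ((1 + Real.exp (-2 * σ ^ 2)) / 2 : ℝ) * ((O₁ * ρ).trace * (O₂ * ρ).trace)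
        + ((1 - Real.exp (-2 * σ ^ 2)) / 2 : ℝ)
            * (((Complex.I • (G * O₁)) * ρ).trace * ((Complex.I • (G * O₂)) * ρ).trace) := by
  set A₁ : ℂ := (O₁ * ρ).trace with hA₁
  set A₂ : ℂ := (O₂ * ρ).trace with hA₂
  set B₁ : ℂ := ((Complex.I • (G * O₁)) * ρ).trace with hB₁
  set B₂ : ℂ := ((Complex.I • (G * O₂)) * ρ).trace with hB₂
  set P : ℂ := (A₁ - Complex.I * B₁) * (A₂ - Complex.I * B₂) / 4 with hP
  set Q : ℂ := (A₁ + Complex.I * B₁) * (A₂ + Complex.I * B₂) / 4 with hQ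
  set R : ℂ := ((A₁ - Complex.I * B₁) * (A₂ + Complex.I * B₂)
      + (A₁ + Complex.I * B₁) * (A₂ - Complex.I * B₂)) / 4 with hR
  have hpt : ∀ θ : ℝ, (gaussDensity σ 0 θ : ℂ)
        * ((O₁ * rotGate G θ * ρ * (rotGate G θ)ᴴ).trace
            * (O₂ * rotGate G θ * ρ * (rotGate G θ)ᴴ).trace)
      = P * ((gaussDensity σ 0 θ : ℂ) * Complex.exp ((2 * Complex.I) * θ))
        + Q * ((gaussDensity σ 0 θ : ℂ) * Complex.exp ((-(2 * Complex.I)) * θ))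
        + R * ((gaussDensity σ 0 θ : ℂ) * Complex.exp ((0 : ℂ) * θ)) := by
    intro θ
    rw [trace_rot G O₁ ρ hGherm hGunit hanti₁ θ, trace_rot G O₂ ρ hGherm hGunit hanti₂ θ]
    have hCS := Complex.sin_sq_add_cos_sq (θ : ℂ)
    have he2 : Complex.exp ((2 * Complex.I) * θ)
        = (Complex.cos (θ : ℂ) + Complex.sin (θ : ℂ) * Complex.I) ^ 2 := by
      rw [show (2 * Complex.I) * (θ : ℂ) = (θ : ℂ) * Complex.I + (θ : ℂ) * Complex.I by ring,
        Complex.exp_add, Complex.exp_mul_I, sq]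
    have hen2 : Complex.exp ((-(2 * Complex.I)) * θ)
        = (Complex.cos (θ : ℂ) - Complex.sin (θ : ℂ) * Complex.I) ^ 2 := by
      rw [show (-(2 * Complex.I)) * (θ : ℂ) = (-(θ : ℂ)) * Complex.I + (-(θ : ℂ)) * Complex.I
        by ring, Complex.exp_add, Complex.exp_mul_I, Complex.cos_neg, Complex.sin_neg, sq]
      ring
    rw [he2, hen2, show ((0 : ℂ)) * (θ : ℂ) = 0 by ring, Complex.exp_zero, mul_one]
    set g : ℂ := (gaussDensity σ 0 θ : ℂ)
    set C : ℂ := Complex.cos (θ : ℂ)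
    set S : ℂ := Complex.sin (θ : ℂ)
    rw [hP, hQ, hR]
    linear_combination (g * (A₁ * A₂ + B₁ * B₂) / 2) * hCS
      + (g * (C * S * (A₁ * B₂ + A₂ * B₁) - A₁ * A₂ * S ^ 2 / 2 - B₁ * B₂ * C ^ 2 / 2
          - B₁ * B₂ * S ^ 2 * (Complex.I ^ 2 - 1) / 2 + B₁ * B₂ / 2)) * Complex.I_sq
  rw [integral_congr_ae (ae_of_all _ hpt)]
  have i1 := (gauss_exp_integrable σ hσ (2 * Complex.I)).const_mul P
  have i2 := (gauss_exp_integrable σ hσ (-(2 * Complex.I))).const_mul Q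
  have i3 := (gauss_exp_integrable σ hσ (0 : ℂ)).const_mul R
  have i12 : Integrable (fun x : ℝ =>
      P * ((gaussDensity σ 0 x : ℂ) * Complex.exp ((2 * Complex.I) * x))
        + Q * ((gaussDensity σ 0 x : ℂ) * Complex.exp ((-(2 * Complex.I)) * x))) volume :=
    i1.add i2
  rw [integral_add i12 i3, integral_add i1 i2,
    integral_const_mul, integral_const_mul, integral_const_mul,
    gauss_exp_integral σ hσ, gauss_exp_integral σ hσ, gauss_exp_integral σ hσ]
  have e1 : ((2 * Complex.I) ^ 2 * (σ : ℂ) ^ 2 / 2) = ((-2 * σ ^ 2 : ℝ) : ℂ) := by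
    push_cast
    linear_combination (2 * (σ : ℂ) ^ 2) * Complex.I_sq
  have e2 : ((-(2 * Complex.I)) ^ 2 * (σ : ℂ) ^ 2 / 2) = ((-2 * σ ^ 2 : ℝ) : ℂ) := by
    push_cast
    linear_combination (2 * (σ : ℂ) ^ 2) * Complex.I_sq
  have e3 : ((0 : ℂ) ^ 2 * (σ : ℂ) ^ 2 / 2) = 0 := by ring
  rw [e1, e2, e3, Complex.exp_zero, ← Complex.ofReal_exp]
  rw [hP, hQ, hR]
  push_cast
  linear_combination (B₁ * B₂ * (Complex.exp (-2 * (σ : ℂ) ^ 2) - 1) / 2) * Complex.I_sq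
end
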